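/- For every integer e, every finite group G and every characteristic subgroup N of G, we have L_e(G) ≤ |N| · L_e(G/N), where L_e(H) is the maximum over automorphisms α of H of the number of elements h ∈ H with α(h) = h^e. Equivalently, the relative function l_e(G) := L_e(G)/|G| is increasing on characteristic quotients. -/

import Mathlib

/-- For every `e : ℤ`, finite `G` and characteristic `N ≤ G`,
`L_e(G) ≤ |N| · L_e(G ⧸ N)`, where `L_e(H)` is the maximum over automorphisms `α` of
`H` of the number of `h ∈ H` with `α h = h ^ e`. -/
theorem stmt_11 {G : Type*} [Group G] [Finite G] (e : ℤ) (N : Subgroup G)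
    [N.Characteristic] :
    (⨆ α : G ≃* G, Nat.card {g : G | α g = g ^ e}) ≤
      Nat.card N * ⨆ β : (G ⧸ N) ≃* (G ⧸ N), Nat.card {y : G ⧸ N | β y = y ^ e} := by
  classical
  have : Fintype G := Fintype.ofFinite G
  refine ciSup_le fun α => ?_
  have hmap : N.map α.toMonoidHom = N := Subgroup.characteristic_iff_map_eq.mp ‹_› α
  set β : (G ⧸ N) ≃* (G ⧸ N) := QuotientGroup.congr N N α hmap with hβ
  have key : Nat.card {g : G | α g = g ^ e} ≤ Nat.card N * Nat.card {y : G ⧸ N | β y = y ^ e} := by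
    rw [Nat.card_eq_card_toFinset, Nat.card_eq_card_toFinset]
    set s := {g : G | α g = g ^ e}.toFinset
    set t := {y : G ⧸ N | β y = y ^ e}.toFinset
    have hm : ∀ g ∈ s, (QuotientGroup.mk g : G ⧸ N) ∈ t := by
      intro g hg
      simp only [s, t, Set.mem_toFinset, Set.mem_setOf_eq] at hg ⊢
      have : β (QuotientGroup.mk g) = QuotientGroup.mk (α g) := rfl
      rw [this, hg]
      simp
    refine Finset.card_le_mul_card_image_of_maps_to hm (Nat.card N) fun b _ => ?_
    -- fiber over b injects into N
    obtain ⟨b0, rfl⟩ := QuotientGroup.mk_surjective b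
    have hN : Nat.card N = (N : Set G).toFinset.card := by
      rw [← Nat.card_eq_card_toFinset]; rfl
    rw [hN]
    apply Finset.card_le_card_of_injOn (fun g => g⁻¹ * b0)
    · intro g hg
      simp only [Finset.mem_coe, Finset.mem_filter] at hg
      rw [Finset.mem_coe, Set.mem_toFinset]
      exact QuotientGroup.eq.mp hg.2
    · intro g1 _ g2 _ h
      have := mul_right_cancel h
      simpa using this
  calc Nat.card {g : G | α g = g ^ e}
      ≤ Nat.card N * Nat.card {y : G ⧸ N | β y = y ^ e} := key
    _ ≤ Nat.card N * ⨆ β : (G ⧸ N) ≃* (G ⧸ N), Nat.card {y : G ⧸ N | β y = y ^ e} := by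
        gcongr
        exact le_ciSup (f := fun β : (G ⧸ N) ≃* (G ⧸ N) => Nat.card {y : G ⧸ N | β y = y ^ e})
          (Set.Finite.bddAbove (Set.finite_range _)) β
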